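/- For every m ≥ 0, the sequence n ↦ y₀(m,n) := ((3^m+1)/2)^(n + 3^(m−1)) mod 3^m is periodic in n with exact (primitive) period φ(3^m), where φ(1) := 1. -/

import Mathlib

lemma aux_lte : ∀ k : ℕ, ∃ c, 4 ^ 3 ^ k = 1 + 3 ^ (k+1) * c ∧ c % 3 = 1 := by
  intro k
  induction k with
  | zero => exact ⟨1, by norm_num, rfl⟩
  | succ k ih =>
    obtain ⟨c, h, hc⟩ := ih
    refine ⟨c + 3^(k+1) * c^2 + 3^(2*k+1) * c^3, ?_, ?_⟩
    · have e : (4:ℕ) ^ 3 ^ (k+1) = (4 ^ 3 ^ k) ^ 3 := by rw [← pow_mul, pow_succ]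
      rw [e, h]; ring
    · have h1 : 3 ∣ 3^(k+1) * c^2 := Dvd.dvd.mul_right (dvd_pow_self 3 (Nat.succ_ne_zero k)) _
      have h2 : 3 ∣ 3^(2*k+1) * c^3 := Dvd.dvd.mul_right (dvd_pow_self 3 (by omega)) _
      omega

theorem stmt_10 (m : ℕ) :
    let y₀ : ℕ → ℕ := fun n => ((3 ^ m + 1) / 2) ^ (n + 3 ^ (m - 1)) % 3 ^ m
    (∀ n : ℕ, y₀ (n + Nat.totient (3 ^ m)) = y₀ n) ∧
    (∀ p : ℕ, 0 < p → (∀ n : ℕ, y₀ (n + p) = y₀ n) → Nat.totient (3 ^ m) ≤ p) := by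
  intro y₀
  rcases Nat.eq_zero_or_pos m with hm | hm
  · subst hm
    constructor
    · intro n; simp [y₀, Nat.mod_one]
    · intro p hp _; simp only [pow_zero, Nat.totient_one]; exact hp
  set N := 3 ^ m with hN
  set a := (3 ^ m + 1) / 2 with ha
  have hNpos : 0 < N := Nat.pow_pos (by norm_num)
  haveI : NeZero N := ⟨hNpos.ne'⟩
  have hodd : Odd (3 ^ m) := Odd.pow (by decide)
  have hdvd2 : 2 ∣ 3 ^ m + 1 := by obtain ⟨j, hj⟩ := hodd; omega
  have h2a : 2 * a = 3 ^ m + 1 := Nat.mul_div_cancel' hdvd2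
  have hmul : (a : ZMod N) * 2 = 1 := by
    have h : ((2 * a : ℕ) : ZMod N) = ((N + 1 : ℕ) : ZMod N) := by rw [h2a, ← hN]
    rw [Nat.cast_mul, Nat.cast_add, Nat.cast_one, ZMod.natCast_self, zero_add] at h
    rw [mul_comm]; exact_mod_cast h
  set u : (ZMod N)ˣ := Units.mkOfMulEqOne (a : ZMod N) 2 hmul with hu
  have huval : (u : ZMod N) = (a : ZMod N) := rfl
  have huinv : ((u⁻¹ : (ZMod N)ˣ) : ZMod N) = 2 := rfl
  have hEuler : (a : ZMod N) ^ Nat.totient N = 1 := by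
    have h := congrArg (Units.val) (ZMod.pow_totient u)
    rwa [Units.val_pow_eq_pow_val, huval, Units.val_one] at h
  have htot : Nat.totient N = 3 ^ (m - 1) * 2 := by
    rw [hN, Nat.totient_prime_pow Nat.prime_three hm]
  constructor
  · intro n
    show a ^ (n + Nat.totient N + 3 ^ (m-1)) % N = a ^ (n + 3 ^ (m-1)) % N
    have h : ((a ^ (n + Nat.totient N + 3 ^ (m-1)) : ℕ) : ZMod N)
        = ((a ^ (n + 3 ^ (m-1)) : ℕ) : ZMod N) := by
      push_cast
      rw [show n + Nat.totient N + 3 ^ (m-1) = (n + 3 ^ (m-1)) + Nat.totient N by ring,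
        pow_add, hEuler, mul_one]
    exact (ZMod.natCast_eq_natCast_iff _ _ _).mp h
  · intro p hp hper
    have key := hper 0
    simp only [y₀, zero_add] at key
    have hZ : ((a ^ (p + 3 ^ (m-1)) : ℕ) : ZMod N) = ((a ^ (3 ^ (m-1)) : ℕ) : ZMod N) :=
      (ZMod.natCast_eq_natCast_iff _ _ _).mpr key
    push_cast at hZ
    have hup : u ^ p = 1 := by
      have h1 : u ^ (p + 3 ^ (m-1)) = u ^ (3 ^ (m-1)) := by
        ext
        rw [Units.val_pow_eq_pow_val, Units.val_pow_eq_pow_val, huval]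
        exact hZ
      rw [pow_add] at h1
      calc u ^ p = u ^ p * u ^ (3^(m-1)) * (u ^ (3^(m-1)))⁻¹ := by group
        _ = u ^ (3^(m-1)) * (u ^ (3^(m-1)))⁻¹ := by rw [h1]
        _ = 1 := mul_inv_cancel _
    have hdvd_p : orderOf u ∣ p := orderOf_dvd_of_pow_eq_one hup
    have transfer : ∀ e : ℕ, u ^ e = 1 → (2 : ℕ) ^ e ≡ 1 [MOD N] := by
      intro e he
      have h : (u⁻¹) ^ e = 1 := by rw [inv_pow, he, inv_one]
      have h' := congrArg Units.val h
      rw [Units.val_pow_eq_pow_val, huinv, Units.val_one] at h'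
      have h'' : (((2:ℕ) ^ e : ℕ) : ZMod N) = ((1 : ℕ) : ZMod N) := by push_cast; exact h'
      exact (ZMod.natCast_eq_natCast_iff _ _ _).mp h''
    have h3N : 3 ∣ N := hN ▸ dvd_pow_self 3 hm.ne'
    -- Fact A
    have factA : ¬ u ^ (3 ^ (m-1)) = 1 := by
      intro h
      have hmod := (transfer _ h).of_dvd h3N
      obtain ⟨j, hj⟩ : Odd (3 ^ (m-1)) := Odd.pow (by decide)
      have h4 : ((2:ℕ)^2) ^ j % 3 = 1 := by rw [Nat.pow_mod]; norm_num
      have he2 : (2:ℕ) ^ (3 ^ (m-1)) % 3 = 2 := by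
        rw [hj, pow_add, pow_mul, pow_one, Nat.mul_mod, h4]
      unfold Nat.ModEq at hmod
      omega
    -- Fact B
    have factB : 2 ≤ m → ¬ u ^ (2 * 3 ^ (m-2)) = 1 := by
      intro hm2 h
      have hmod := transfer _ h
      obtain ⟨c, hc, hc3⟩ := aux_lte (m - 2)
      have h4 : (2:ℕ) ^ (2 * 3 ^ (m-2)) = 4 ^ 3 ^ (m-2) := by
        rw [pow_mul]; norm_num
      rw [h4, hc] at hmod
      have hdvd : N ∣ 3 ^ (m-2+1) * c := by
        have h' := (Nat.modEq_iff_dvd' (Nat.le_add_right 1 _)).mp hmod.symm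
        simpa using h'
      have hm1 : m - 2 + 1 = m - 1 := by omega
      rw [hm1] at hdvd
      have hNe : N = 3^(m-1) * 3 := by rw [hN, ← pow_succ]; congr 1; omega
      rw [hNe] at hdvd
      have h3c : 3 ∣ c :=
        (Nat.mul_dvd_mul_iff_left (pow_pos (by norm_num : (0:ℕ) < 3) (m-1))).mp hdvd
      omega
    -- order of u is exactly φ(N)
    have hordφ : orderOf u = Nat.totient N := by
      have hdvdφ : orderOf u ∣ Nat.totient N := orderOf_dvd_of_pow_eq_one (ZMod.pow_totient u)
      by_contra hne
      obtain ⟨e, he⟩ := hdvdφ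
      have hφpos : 0 < Nat.totient N := Nat.totient_pos.mpr hNpos
      have he1 : e ≠ 1 := by intro h; rw [h, mul_one] at he; exact hne he.symm
      have he0 : e ≠ 0 := by intro h; rw [h, mul_zero] at he; omega
      obtain ⟨q, hq, hqe⟩ := Nat.exists_prime_and_dvd he1
      have hqφ : q ∣ 3 ^ (m-1) * 2 := by
        rw [← htot, he]; exact Dvd.dvd.mul_left hqe _
      have hq23 : q = 2 ∨ q = 3 := by
        rcases (Nat.Prime.dvd_mul hq).mp hqφ with h | h
        · right; exact (Nat.prime_dvd_prime_iff_eq hq Nat.prime_three).mp (hq.dvd_of_dvd_pow h)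
        · left; exact (Nat.prime_dvd_prime_iff_eq hq Nat.prime_two).mp h
      obtain ⟨e', he'⟩ := hqe
      rcases hq23 with h2 | h3
      · subst h2
        have heq : 3^(m-1) * 2 = (orderOf u * e') * 2 := by rw [← htot, he, he']; ring
        have heq' : 3^(m-1) = orderOf u * e' := Nat.eq_of_mul_eq_mul_right (by norm_num) heq
        exact factA (orderOf_dvd_iff_pow_eq_one.mp ⟨e', heq'.symm ▸ rfl⟩)
      · subst h3
        have hm2 : 2 ≤ m := by
          by_contra h
          have hm1' : m = 1 := by omega
          subst hm1'
          norm_num at hqφ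
        have hpow : (3:ℕ)^(m-1) = 3^(m-2) * 3 := by rw [← pow_succ]; congr 1; omega
        have heq : (2 * 3^(m-2)) * 3 = (orderOf u * e') * 3 := by
          calc (2 * 3^(m-2)) * 3 = 3^(m-1) * 2 := by rw [hpow]; ring
            _ = orderOf u * e := by rw [← htot, he]
            _ = (orderOf u * e') * 3 := by rw [he']; ring
        have heq' : 2 * 3^(m-2) = orderOf u * e' := Nat.eq_of_mul_eq_mul_right (by norm_num) heq
        exact factB hm2 (orderOf_dvd_iff_pow_eq_one.mp ⟨e', heq'⟩)
    rw [← hordφ]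
    exact Nat.le_of_dvd hp hdvd_p
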